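/- Let A and B be nontrivial groups and identify A and B with their images in the free product A ∗ B. Then for all x, y ∈ A ∗ B, the subgroup of A ∗ B generated by xAx⁻¹ and yBy⁻¹ equals the whole group A ∗ B if and only if the cosets xA and yB have nonempty intersection. (This is the algebraic characterization of adjacency of the vertices xA and yB in the Bass–Serre tree of A ∗ B.) -/

import Mathlib

namespace BassSerreAux

open Monoid Monoid.CoprodI Monoid.CoprodI.Word

variable {ι : Type*} {M : ι → Type*} [∀ i, Group (M i)] [DecidableEq ι]
  [∀ i, DecidableEq (M i)]

theorem toList_of_smul {k : ι} (m : M k) (hm : m ≠ 1) (w : Word M)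
    (hw : w.fstIdx ≠ some k) :
    (CoprodI.of m • w).toList = ⟨k, m⟩ :: w.toList := by
  rw [← cons_eq_smul (m := m) (ls := w) (h1 := hw) (h2 := hm)]
  rfl

theorem prod_smul_toList (u v : Word M)
    (h : ∀ x ∈ u.toList.getLast?, ∀ y ∈ v.toList.head?, x.1 ≠ y.1) :
    (u.prod • v).toList = u.toList ++ v.toList := by
  induction u using consRecOn with
  | empty => simp
  | cons k m u' h1 h2 ih =>
    rw [prod_cons, mul_smul]
    by_cases hnil : u'.toList = []
    · have hu' : u' = Word.empty := Word.ext hnil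
      subst hu'
      simp only [prod_empty, one_smul]
      rw [toList_of_smul m h2 v]
      · simp
      · rw [fstIdx_ne_iff]
        intro y hy
        exact h ⟨k, m⟩ (by simp [hnil]) y hy
    · have hlast : (Word.cons m u' h1 h2).toList.getLast? = u'.toList.getLast? := by
        rcases hl : u'.toList with _ | ⟨a, l⟩
        · exact absurd hl hnil
        · simp [hl]
      have ih' := ih (fun x hx y hy => h x (by rw [hlast]; exact hx) y hy)
      rw [toList_of_smul m h2 (u'.prod • v) ?_]
      · rw [ih']; rfl
      · rw [fstIdx_ne_iff]
        intro l hl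
        rw [ih'] at hl
        rw [List.head?_append_of_ne_nil _ hnil] at hl
        have := fstIdx_ne_iff.mp h1
        exact this l hl

theorem exists_inv_word (u : Word M) :
    ∃ v : Word M, v.prod = u.prod⁻¹ ∧
      v.toList = (u.toList.map fun x => (⟨x.1, x.2⁻¹⟩ : Σ i, M i)).reverse := by
  induction u using consRecOn with
  | empty => exact ⟨Word.empty, by simp, by simp⟩
  | cons k m u' h1 h2 ih =>
    obtain ⟨v', hv'p, hv'l⟩ := ih
    have hm' : m⁻¹ ≠ 1 := inv_ne_one.mpr h2
    have hemp : (Word.empty : Word M).fstIdx ≠ some k := by simp [fstIdx]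
    set s : Word M := Word.cons m⁻¹ Word.empty hemp hm' with hs
    have hcond : ∀ x ∈ v'.toList.getLast?, ∀ y ∈ s.toList.head?, x.1 ≠ y.1 := by
      intro x hx y hy
      rw [hv'l, List.getLast?_reverse, List.head?_map] at hx
      simp only [hs] at hy
      have hy' : y = ⟨k, m⁻¹⟩ := ((by simpa using hy : (⟨k, m⁻¹⟩ : Σ i, M i) = y)).symm
      subst hy'
      rcases Option.map_eq_some_iff.mp hx with ⟨z, hz, rfl⟩
      have := fstIdx_ne_iff.mp h1
      exact fun hc => this z hz (hc ▸ rfl)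
    refine ⟨v'.prod • s, ?_, ?_⟩
    · rw [prod_smul, hv'p, prod_cons]
      simp [mul_inv_rev]
    · rw [prod_smul_toList v' s hcond, hv'l]
      simp [hs, List.reverse_cons]

theorem prod_equiv_self (g : CoprodI M) : (Word.equiv g).prod = g :=
  Word.equiv.symm_apply_apply g

theorem equiv_prod_self (w : Word M) : Word.equiv w.prod = w :=
  Word.equiv.apply_symm_apply w

theorem equiv_inv_toList (g : CoprodI M) :
    (Word.equiv g⁻¹).toList
      = ((Word.equiv g).toList.map fun x => (⟨x.1, x.2⁻¹⟩ : Σ i, M i)).reverse := by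
  obtain ⟨v, hvp, hvl⟩ := exists_inv_word (Word.equiv g)
  rw [prod_equiv_self] at hvp
  rw [← hvp, equiv_prod_self, hvl]

theorem strip (w : Word M) {k : ι} {m : M k} {t : List (Σ i, M i)}
    (h : w.toList = ⟨k, m⟩ :: t) :
    ∃ w' : Word M, w'.toList = t ∧ CoprodI.of m • w' = w ∧ m ≠ 1 ∧
      w'.fstIdx ≠ some k := by
  have hne : ∀ l ∈ t, Sigma.snd l ≠ 1 := fun l hl =>
    w.ne_one l (h ▸ List.mem_cons_of_mem _ hl)
  have hch' := w.chain_ne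
  rw [h] at hch'
  refine ⟨⟨t, hne, hch'.tail⟩, rfl, ?_, ?_, ?_⟩
  · have hm : m ≠ 1 := w.ne_one ⟨k, m⟩ (h ▸ List.mem_cons_self)
    have hfst : Word.fstIdx ⟨t, hne, hch'.tail⟩ ≠ some k := by
      rw [fstIdx_ne_iff]
      intro l hl
      rw [List.isChain_cons] at hch'
      exact fun hc => hch'.1 l hl (hc ▸ rfl)
    rw [← cons_eq_smul (m := m) (h1 := hfst) (h2 := hm)]
    exact (Word.ext (by simp [Word.cons, h])).symm
  · exact w.ne_one ⟨k, m⟩ (h ▸ List.mem_cons_self)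
  · rw [fstIdx_ne_iff]
    intro l hl
    rw [List.isChain_cons] at hch'
    exact fun hc => hch'.1 l hl (hc ▸ rfl)



/-- Reachable words in the ping-pong argument. `Good i j g true w` : `w` is obtained by
prepending a nontrivial `M i`-letter to a `false`-good (or empty) word; `Good i j g false w` :
`w` is obtained by acting by a nontrivial conjugate `g (of b) g⁻¹` on a `true`-good (or
empty) word. -/
inductive Good (i j : ι) (g : CoprodI M) : Bool → Word M → Prop
  | tt0 (a : M i) (ha : a ≠ 1) : Good i j g true (CoprodI.of a • Word.empty)
  | tt1 (a : M i) (ha : a ≠ 1) (v : Word M) (hv : Good i j g false v) :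
      Good i j g true (CoprodI.of a • v)
  | ff0 (b : M j) (hb : b ≠ 1) :
      Good i j g false ((g * CoprodI.of b * g⁻¹) • Word.empty)
  | ff1 (b : M j) (hb : b ≠ 1) (v : Word M) (hv : Good i j g true v) :
      Good i j g false ((g * CoprodI.of b * g⁻¹) • v)

section CC

variable {i j k : ι} {g : CoprodI M} {b₁ : M k} {p : Word M}

/-- The central computation: the normal form of `(g * of b * g⁻¹) • v`. -/
theorem cc (hik : k ≠ i) (hg : g = CoprodI.of b₁ * p.prod) (hb₁ : b₁ ≠ 1)
    (hph : p.fstIdx ≠ some k)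
    (hpl : ∀ x ∈ p.toList.getLast?, x.1 ≠ j)
    (hpe : p.toList = [] → k ≠ j)
    (b : M j) (hb : b ≠ 1) (v : Word M)
    (hv : v.toList = [] ∨ ∃ x ∈ v.toList.head?, x.1 = i) :
    ((g * CoprodI.of b * g⁻¹) • v).toList
      = ⟨k, b₁⟩ :: (p.toList ++ ⟨j, b⟩ ::
          ((p.toList.map fun x => (⟨x.1, x.2⁻¹⟩ : Σ i, M i)).reverse
            ++ ⟨k, b₁⁻¹⟩ :: v.toList)) := by
  obtain ⟨pinv, hpinvp, hpinvl⟩ := exists_inv_word p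
  have hvk : v.fstIdx ≠ some k := by
    rw [fstIdx_ne_iff]
    intro l hl hc
    rcases hv with hnil | ⟨x, hx, hxi⟩
    · simp [hnil] at hl
    · rw [hl] at hx
      cases hx
      exact hik (hc ▸ hxi)
  -- step 1
  have l1 : (CoprodI.of b₁⁻¹ • v).toList = ⟨k, b₁⁻¹⟩ :: v.toList :=
    toList_of_smul _ (inv_ne_one.mpr hb₁) v hvk
  -- step 2
  have l2 : (pinv.prod • (CoprodI.of b₁⁻¹ • v)).toList
      = pinv.toList ++ ⟨k, b₁⁻¹⟩ :: v.toList := by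
    rw [prod_smul_toList, l1]
    intro x hx y hy
    rw [hpinvl, List.getLast?_reverse, List.head?_map] at hx
    rcases Option.map_eq_some_iff.mp hx with ⟨z, hz, rfl⟩
    rw [l1] at hy
    simp only [List.head?_cons, Option.mem_def, Option.some.injEq] at hy
    subst hy
    exact fun hc => (fstIdx_ne_iff.mp hph) z hz (hc ▸ rfl)
  -- step 3
  have l3 : (CoprodI.of b • (pinv.prod • (CoprodI.of b₁⁻¹ • v))).toList
      = ⟨j, b⟩ :: (pinv.toList ++ ⟨k, b₁⁻¹⟩ :: v.toList) := by
    rw [toList_of_smul _ hb _ ?_, l2]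
    rw [fstIdx_ne_iff]
    intro l hl hc
    rw [l2] at hl
    rcases hpnil : p.toList with _ | ⟨z, zs⟩
    · have : pinv.toList = [] := by rw [hpinvl, hpnil]; simp
      rw [this] at hl
      simp only [List.nil_append, List.head?_cons, Option.mem_def,
        Option.some.injEq] at hl
      subst hl
      exact (hpe hpnil) hc.symm
    · have hpinvne : pinv.toList ≠ [] := by
        rw [hpinvl, hpnil]; simp
      rw [List.head?_append_of_ne_nil _ hpinvne] at hl
      rw [hpinvl, List.head?_reverse, List.getLast?_map] at hl
      rcases Option.map_eq_some_iff.mp hl with ⟨z', hz', rfl⟩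
      exact hpl z' hz' hc.symm
  -- step 4
  have l4 : (p.prod • (CoprodI.of b • (pinv.prod • (CoprodI.of b₁⁻¹ • v)))).toList
      = p.toList ++ ⟨j, b⟩ :: (pinv.toList ++ ⟨k, b₁⁻¹⟩ :: v.toList) := by
    rw [prod_smul_toList, l3]
    intro x hx y hy
    rw [l3] at hy
    simp only [List.head?_cons, Option.mem_def, Option.some.injEq] at hy
    subst hy
    exact hpl x hx
  -- step 5
  have l5 : (CoprodI.of b₁ •
        (p.prod • (CoprodI.of b • (pinv.prod • (CoprodI.of b₁⁻¹ • v))))).toList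
      = ⟨k, b₁⟩ :: (p.toList ++ ⟨j, b⟩ ::
          (pinv.toList ++ ⟨k, b₁⁻¹⟩ :: v.toList)) := by
    rw [toList_of_smul _ hb₁ _ ?_, l4]
    rw [fstIdx_ne_iff]
    intro l hl hc
    rw [l4] at hl
    rcases hpnil : p.toList with _ | ⟨z, zs⟩
    · rw [hpnil] at hl
      simp only [List.nil_append, List.head?_cons, Option.mem_def,
        Option.some.injEq] at hl
      subst hl
      exact (hpe hpnil) hc
    · have hpne : p.toList ≠ [] := by rw [hpnil]; simp
      rw [List.head?_append_of_ne_nil _ hpne] at hl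
      exact (fstIdx_ne_iff.mp hph) l hl hc
  have key : (g * CoprodI.of b * g⁻¹) • v
      = CoprodI.of b₁ •
          (p.prod • (CoprodI.of b • (pinv.prod • (CoprodI.of b₁⁻¹ • v)))) := by
    rw [hg]
    have h1 : pinv.prod = p.prod⁻¹ := hpinvp
    have h2 : (CoprodI.of b₁⁻¹ : CoprodI M) = (CoprodI.of b₁)⁻¹ := map_inv _ _
    rw [h1, h2]
    simp only [← mul_smul]
    congr 1
    group
  rw [key, l5, hpinvl]

end CC


section Spec

variable {i j k : ι} {g : CoprodI M} {b₁ : M k} {p : Word M}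

theorem good_spec (hik : k ≠ i) (hg : g = CoprodI.of b₁ * p.prod) (hb₁ : b₁ ≠ 1)
    (hph : p.fstIdx ≠ some k)
    (hpl : ∀ x ∈ p.toList.getLast?, x.1 ≠ j)
    (hpe : p.toList = [] → k ≠ j) :
    ∀ {t : Bool} {w : Word M}, Good i j g t w →
      (t = true → ∃ x ∈ w.toList.head?, x.1 = i) ∧
      (t = false → (∃ x ∈ w.toList.head?, x.1 = k) ∧ 2 ≤ w.toList.length) := by
  intro t w h
  induction h with
  | tt0 a ha =>
    refine ⟨fun _ => ?_, fun hc => by cases hc⟩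
    rw [toList_of_smul a ha Word.empty (by simp [fstIdx])]
    exact ⟨⟨i, a⟩, by simp⟩
  | tt1 a ha v hv ih =>
    refine ⟨fun _ => ?_, fun hc => by cases hc⟩
    obtain ⟨⟨x, hx, hxk⟩, -⟩ := ih.2 rfl
    have hfi : v.fstIdx ≠ some i := by
      rw [fstIdx_ne_iff]
      intro l hl hc
      rw [hl] at hx; cases hx
      exact hik (by rw [← hxk, hc])
    rw [toList_of_smul a ha v hfi]
    exact ⟨⟨i, a⟩, by simp⟩
  | ff0 b hb =>
    refine ⟨fun hc => (nomatch hc), fun _ => ?_⟩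
    rw [cc hik hg hb₁ hph hpl hpe b hb Word.empty (Or.inl rfl)]
    exact ⟨⟨⟨k, b₁⟩, by simp, rfl⟩, by simp; omega⟩
  | ff1 b hb v hv ih =>
    refine ⟨fun hc => (nomatch hc), fun _ => ?_⟩
    obtain ⟨x, hx, hxi⟩ := ih.1 rfl
    rw [cc hik hg hb₁ hph hpl hpe b hb v (Or.inr ⟨x, hx, hxi⟩)]
    exact ⟨⟨⟨k, b₁⟩, by simp, rfl⟩, by simp; omega⟩

end Spec

section Step

variable {i j : ι} {g : CoprodI M}

/-- Invariant predicate on group elements. -/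
def GP (i j : ι) (g : CoprodI M) (h : CoprodI M) : Prop :=
  (h • Word.empty : Word M) = Word.empty ∨ Good i j g true (h • Word.empty) ∨
    Good i j g false (h • Word.empty)

theorem gp_word (i j : ι) (g : CoprodI M) (h : CoprodI M)
    (hw : ∀ w : Word M, (w = Word.empty ∨ Good i j g true w ∨ Good i j g false w) →
      ((h • w : Word M) = Word.empty ∨ Good i j g true (h • w) ∨
        Good i j g false (h • w)))
    {y : CoprodI M} (hy : GP i j g y) : GP i j g (h * y) := by
  unfold GP at *
  rw [mul_smul]
  rcases hy with hy | hy | hy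
  · rw [hy]; exact hw _ (Or.inl rfl)
  · exact hw _ (Or.inr (Or.inl hy))
  · exact hw _ (Or.inr (Or.inr hy))

theorem good_step_a (a : M i) :
    ∀ w : Word M, (w = Word.empty ∨ Good i j g true w ∨ Good i j g false w) →
      ((CoprodI.of a • w : Word M) = Word.empty ∨
        Good i j g true (CoprodI.of a • w) ∨ Good i j g false (CoprodI.of a • w)) := by
  intro w hw
  by_cases ha : a = 1
  · subst ha; rw [map_one, one_smul]; exact hw
  rcases hw with rfl | hw | hw
  · exact Or.inr (Or.inl (Good.tt0 a ha))
  · cases hw with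
    | tt0 a' ha' =>
      rw [← mul_smul, ← map_mul]
      by_cases h1 : a * a' = 1
      · rw [h1, map_one, one_smul]; exact Or.inl rfl
      · exact Or.inr (Or.inl (Good.tt0 _ h1))
    | tt1 a' ha' v hv =>
      rw [← mul_smul, ← map_mul]
      by_cases h1 : a * a' = 1
      · rw [h1, map_one, one_smul]; exact Or.inr (Or.inr hv)
      · exact Or.inr (Or.inl (Good.tt1 _ h1 v hv))
  · exact Or.inr (Or.inl (Good.tt1 a ha _ hw))

omit [DecidableEq ι] [(i : ι) → DecidableEq (M i)] in
theorem conj_merge (g : CoprodI M) (b b' : M j) :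
    (g * CoprodI.of b * g⁻¹) * (g * CoprodI.of b' * g⁻¹)
      = g * CoprodI.of (b * b') * g⁻¹ := by
  rw [map_mul]; group

theorem good_step_b (b : M j) :
    ∀ w : Word M, (w = Word.empty ∨ Good i j g true w ∨ Good i j g false w) →
      (((g * CoprodI.of b * g⁻¹) • w : Word M) = Word.empty ∨
        Good i j g true ((g * CoprodI.of b * g⁻¹) • w) ∨
        Good i j g false ((g * CoprodI.of b * g⁻¹) • w)) := by
  intro w hw
  by_cases hb : b = 1
  · subst hb
    have : g * CoprodI.of (1 : M j) * g⁻¹ = 1 := by rw [map_one]; group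
    rw [this, one_smul]; exact hw
  rcases hw with rfl | hw | hw
  · exact Or.inr (Or.inr (Good.ff0 b hb))
  · exact Or.inr (Or.inr (Good.ff1 b hb _ hw))
  · cases hw with
    | ff0 b' hb' =>
      rw [← mul_smul, conj_merge]
      by_cases h1 : b * b' = 1
      · rw [h1, map_one]
        have : g * (1 : CoprodI M) * g⁻¹ = 1 := by group
        rw [this, one_smul]
        exact Or.inl rfl
      · exact Or.inr (Or.inr (Good.ff0 _ h1))
    | ff1 b' hb' v hv =>
      rw [← mul_smul, conj_merge]
      by_cases h1 : b * b' = 1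
      · rw [h1, map_one]
        have : g * (1 : CoprodI M) * g⁻¹ = 1 := by group
        rw [this, one_smul]
        exact Or.inr (Or.inl hv)
      · exact Or.inr (Or.inr (Good.ff1 _ h1 v hv))

end Step

section Core

theorem conj_hom_mul {G : Type*} [Group G] (u v : G) :
    (MulAut.conj (u * v)).toMonoidHom
      = ((MulAut.conj u).toMonoidHom).comp (MulAut.conj v).toMonoidHom := by
  ext z
  simp [MulAut.conj_apply, mul_assoc]

theorem map_aut_top_iff {G : Type*} [Group G] (e : MulAut G) (S : Subgroup G) :
    Subgroup.map e.toMonoidHom S = ⊤ ↔ S = ⊤ := by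
  constructor
  · intro h
    apply Subgroup.map_injective (show Function.Injective ⇑e.toMonoidHom from e.injective)
    rw [h]
    symm
    apply le_antisymm le_top
    intro x _
    exact ⟨e.symm x, Subgroup.mem_top _, e.apply_symm_apply x⟩
  · rintro rfl
    apply le_antisymm le_top
    intro x _
    exact ⟨e.symm x, Subgroup.mem_top _, e.apply_symm_apply x⟩

theorem map_conj_of_range {l : ι} (c : M l) :
    Subgroup.map (MulAut.conj (CoprodI.of c)).toMonoidHom
        (CoprodI.of : M l →* CoprodI M).range
      = (CoprodI.of : M l →* CoprodI M).range := by
  apply le_antisymm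
  · rintro _ ⟨_, ⟨b, rfl⟩, rfl⟩
    refine ⟨c * b * c⁻¹, ?_⟩
    simp [MulAut.conj_apply, map_mul, map_inv]
  · rintro _ ⟨b, rfl⟩
    refine ⟨CoprodI.of (c⁻¹ * b * c), ⟨c⁻¹ * b * c, rfl⟩, ?_⟩
    show CoprodI.of c * CoprodI.of (c⁻¹ * b * c) * (CoprodI.of c)⁻¹ = CoprodI.of b
    rw [map_mul, map_mul, map_inv]
    group

theorem core (i j : ι) (hij : i ≠ j) :
    ∀ (n : ℕ) (g : CoprodI M), (Word.equiv g).toList.length ≤ n →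
      (CoprodI.of : M i →* CoprodI M).range ⊔
        Subgroup.map (MulAut.conj g).toMonoidHom
          (CoprodI.of : M j →* CoprodI M).range = ⊤ →
      ∃ (a : M i) (b : M j), g = CoprodI.of a * CoprodI.of b := by
  intro n
  induction n with
  | zero =>
    intro g hlen _
    have hnil : (Word.equiv g).toList = [] := List.length_eq_zero_iff.mp (Nat.le_zero.mp hlen)
    have hg1 : g = 1 := by
      conv_lhs => rw [← prod_equiv_self g]
      rw [show Word.equiv g = Word.empty from Word.ext hnil, prod_empty]
    exact ⟨1, 1, by simp [hg1]⟩
  | succ n ih =>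
    intro g hlen htop
    rcases hl : (Word.equiv g).toList with _ | ⟨⟨k, m⟩, t⟩
    · have hg1 : g = 1 := by
        conv_lhs => rw [← prod_equiv_self g]
        rw [show Word.equiv g = Word.empty from Word.ext hl, prod_empty]
      exact ⟨1, 1, by simp [hg1]⟩
    · by_cases hki : k = i
      · subst hki
        obtain ⟨w', hw't, hw's, hm, hfst⟩ := strip (Word.equiv g) hl
        have hg : g = CoprodI.of m * w'.prod := by
          conv_lhs => rw [← prod_equiv_self g]
          rw [← hw's, prod_smul]
        have hlen' : (Word.equiv w'.prod).toList.length ≤ n := by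
          rw [equiv_prod_self, hw't]
          have h1 := hlen
          rw [hl] at h1
          simpa using h1
        have htop' : (CoprodI.of : M k →* CoprodI M).range ⊔
            Subgroup.map (MulAut.conj w'.prod).toMonoidHom
              (CoprodI.of : M j →* CoprodI M).range = ⊤ := by
          rw [hg, conj_hom_mul, ← Subgroup.map_map] at htop
          rw [← map_conj_of_range (l := k) m, ← Subgroup.map_sup] at htop
          exact (map_aut_top_iff _ _).mp htop
        obtain ⟨a, b, hab⟩ := ih w'.prod hlen' htop'
        exact ⟨m * a, b, by rw [hg, hab, map_mul, mul_assoc]⟩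
      · have hLne : ((⟨k, m⟩ :: t : List (Σ i, M i))) ≠ [] := List.cons_ne_nil _ _
        rcases hy : (⟨k, m⟩ :: t : List (Σ i, M i)).getLast hLne with ⟨l', c⟩
        by_cases hyj : l' = j
        · subst hyj
          have hinv : (Word.equiv g⁻¹).toList
              = (((⟨k, m⟩ :: t : List (Σ i, M i))).map
                  fun x => (⟨x.1, x.2⁻¹⟩ : Σ i, M i)).reverse := by
            rw [equiv_inv_toList, hl]
          have hhead : (Word.equiv g⁻¹).toList.head? = some ⟨l', c⁻¹⟩ := by
            rw [hinv, List.head?_reverse, List.getLast?_map,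
              List.getLast?_eq_getLast hLne, hy]
            rfl
          rcases hlist : (Word.equiv g⁻¹).toList with _ | ⟨z, r⟩
          · rw [hlist] at hhead; cases hhead
          · have hz : z = ⟨l', c⁻¹⟩ := by
              rw [hlist] at hhead
              simpa using hhead
            subst hz
            obtain ⟨w'', hw''t, hw''s, hc, hfst''⟩ := strip (Word.equiv g⁻¹) hlist
            have hginv : g⁻¹ = CoprodI.of c⁻¹ * w''.prod := by
              conv_lhs => rw [← prod_equiv_self g⁻¹]
              rw [← hw''s, prod_smul]
            have hgq : g = w''.prod⁻¹ * CoprodI.of c := by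
              have h2 := congrArg (·⁻¹) hginv
              simpa [mul_inv_rev, map_inv] using h2
            have hlen' : (Word.equiv w''.prod⁻¹).toList.length ≤ n := by
              rw [equiv_inv_toList, equiv_prod_self, List.length_reverse,
                List.length_map, hw''t]
              have h1 : (Word.equiv g⁻¹).toList.length
                  = (⟨k, m⟩ :: t : List (Σ i, M i)).length := by
                rw [hinv, List.length_reverse, List.length_map]
              rw [hlist] at h1
              rw [hl] at hlen
              simp only [List.length_cons] at h1 hlen
              omega
            have htop' : (CoprodI.of : M i →* CoprodI M).range ⊔
                Subgroup.map (MulAut.conj w''.prod⁻¹).toMonoidHom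
                  (CoprodI.of : M l' →* CoprodI M).range = ⊤ := by
              rw [hgq, conj_hom_mul, ← Subgroup.map_map,
                map_conj_of_range (l := l') c] at htop
              exact htop
            obtain ⟨a, b, hab⟩ := ih w''.prod⁻¹ hlen' htop'
            exact ⟨a, b * c, by rw [hgq, hab, map_mul, mul_assoc]⟩
        · exfalso
          obtain ⟨w', hw't, hw's, hm, hfst⟩ := strip (Word.equiv g) hl
          have hg : g = CoprodI.of m * w'.prod := by
            conv_lhs => rw [← prod_equiv_self g]
            rw [← hw's, prod_smul]
          have hpl : ∀ x ∈ w'.toList.getLast?, x.1 ≠ j := by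
            rw [hw't]
            intro z hz hzj
            have ht : t ≠ [] := by rintro rfl; simp at hz
            have hLlast : (⟨k, m⟩ :: t : List (Σ i, M i)).getLast? = some z := by
              rcases ht' : t with _ | ⟨z', t'⟩
              · exact absurd ht' ht
              · subst ht'
                rw [List.getLast?_cons_cons]
                simpa using hz
            have hzy : z = ⟨l', c⟩ := by
              rw [List.getLast?_eq_getLast hLne, hy] at hLlast
              exact (Option.some_injective _ hLlast).symm
            rw [hzy] at hzj
            exact hyj hzj
          have hpe : w'.toList = [] → k ≠ j := by
            intro ht hkj
            have ht2 : t = [] := by rw [← hw't]; exact ht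
            subst ht2
            have h1 : (⟨k, m⟩ : Σ i, M i) = ⟨l', c⟩ := by rw [← hy]; simp
            apply hyj
            rw [← (Sigma.mk.inj_iff.mp h1).1]
            exact hkj
          have hmem : CoprodI.of m ∈
              (CoprodI.of : M i →* CoprodI M).range ⊔
                Subgroup.map (MulAut.conj g).toMonoidHom
                  (CoprodI.of : M j →* CoprodI M).range := htop ▸ Subgroup.mem_top _
          rw [Subgroup.sup_eq_closure] at hmem
          have hGP : GP i j g (CoprodI.of m) := by
            refine Subgroup.closure_induction_left
              (p := fun x _ => GP i j g x) ?_ ?_ ?_ hmem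
            · exact Or.inl (one_smul _ _)
            · rintro x (⟨a, rfl⟩ | ⟨_, ⟨b, rfl⟩, rfl⟩) y hy hGPy
              · exact gp_word i j g _ (good_step_a a) hGPy
              · have hx : (MulAut.conj g).toMonoidHom (CoprodI.of b)
                    = g * CoprodI.of b * g⁻¹ := rfl
                rw [hx]
                exact gp_word i j g _ (good_step_b b) hGPy
            · rintro x (⟨a, rfl⟩ | ⟨_, ⟨b, rfl⟩, rfl⟩) y hy hGPy
              · rw [← map_inv]
                exact gp_word i j g _ (good_step_a a⁻¹) hGPy
              · have hx : ((MulAut.conj g).toMonoidHom (CoprodI.of b))⁻¹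
                    = g * CoprodI.of b⁻¹ * g⁻¹ := by
                  show (g * CoprodI.of b * g⁻¹)⁻¹ = _
                  rw [map_inv]
                  group
                rw [hx]
                exact gp_word i j g _ (good_step_b b⁻¹) hGPy
          have hword : ((CoprodI.of m • Word.empty : Word M)).toList = [⟨k, m⟩] := by
            rw [toList_of_smul m hm Word.empty (by simp [fstIdx])]
            rfl
          rcases hGP with h0 | h1 | h2
          · rw [h0] at hword
            simp at hword
          · obtain ⟨x, hx, hxi⟩ :=
              (good_spec hki hg hm hfst hpl hpe h1).1 rfl
            rw [hword] at hx
            simp only [List.head?_cons, Option.mem_def, Option.some.injEq] at hx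
            subst hx
            exact hki hxi
          · obtain ⟨-, hlen2⟩ := (good_spec hki hg hm hfst hpl hpe h2).2 rfl
            rw [hword] at hlen2
            simp at hlen2

end Core

section Transfer

universe u v

/-- The two-element family of groups corresponding to a binary free product. -/
def Fam (A : Type u) (B : Type v) : Bool → Type (max u v) :=
  fun b => cond b (ULift A) (ULift B)

instance famGroup (A : Type u) (B : Type v) [Group A] [Group B] :
    (b : Bool) → Group (Fam A B b)
  | true => inferInstanceAs (Group (ULift A))
  | false => inferInstanceAs (Group (ULift B))

variable (A : Type u) (B : Type v) [Group A] [Group B]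

/-- From the binary coproduct to the indexed coproduct. -/
def toFam : Monoid.Coprod A B →* Monoid.CoprodI (Fam A B) :=
  Monoid.Coprod.lift
    ((Monoid.CoprodI.of (M := Fam A B) (i := true)).comp
      (MulEquiv.ulift.symm.toMonoidHom))
    ((Monoid.CoprodI.of (M := Fam A B) (i := false)).comp
      (MulEquiv.ulift.symm.toMonoidHom))

/-- From the indexed coproduct to the binary coproduct. -/
def ofFam : Monoid.CoprodI (Fam A B) →* Monoid.Coprod A B :=
  Monoid.CoprodI.lift (fun b => match b with
    | true => (Monoid.Coprod.inl (M := A) (N := B)).comp (MulEquiv.ulift.toMonoidHom)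
    | false => (Monoid.Coprod.inr (M := A) (N := B)).comp (MulEquiv.ulift.toMonoidHom))

theorem ofFam_comp_toFam : (ofFam A B).comp (toFam A B) = MonoidHom.id _ := by
  apply Monoid.Coprod.hom_ext
  · ext a
    rfl
  · ext b
    rfl

theorem toFam_comp_ofFam : (toFam A B).comp (ofFam A B) = MonoidHom.id _ := by
  apply Monoid.CoprodI.ext_hom
  intro b
  cases b
  · ext x
    rfl
  · ext x
    rfl

/-- The equivalence between the binary and indexed coproducts. -/
def famEquiv : Monoid.Coprod A B ≃* Monoid.CoprodI (Fam A B) :=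
  MonoidHom.toMulEquiv (toFam A B) (ofFam A B) (ofFam_comp_toFam A B) (toFam_comp_ofFam A B)

end Transfer

section Binary

variable {A : Type*} {B : Type*} [Group A] [Group B]

theorem coprod_core (g : Monoid.Coprod A B)
    (h : (Monoid.Coprod.inl : A →* Monoid.Coprod A B).range ⊔
      Subgroup.map (MulAut.conj g).toMonoidHom
        (Monoid.Coprod.inr : B →* Monoid.Coprod A B).range = ⊤) :
    ∃ (a : A) (b : B), g = Monoid.Coprod.inl a * Monoid.Coprod.inr b := by
  classical
  letI instD : ∀ b : Bool, DecidableEq (Fam A B b) := fun b => Classical.decEq _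
  set e := famEquiv A B with he
  set E := e.toMonoidHom with hE
  have hEsurj : Function.Surjective ⇑E := e.surjective
  -- transfer the hypothesis through `E`
  have h2 := congrArg (Subgroup.map E) h
  rw [Subgroup.map_sup] at h2
  have hE1 : Subgroup.map E (Monoid.Coprod.inl : A →* Monoid.Coprod A B).range
      = (Monoid.CoprodI.of : Fam A B true →* Monoid.CoprodI (Fam A B)).range := by
    rw [MonoidHom.map_range]
    have hcomp : E.comp (Monoid.Coprod.inl : A →* Monoid.Coprod A B)
        = (Monoid.CoprodI.of (M := Fam A B) (i := true)).comp
            (MulEquiv.ulift.symm.toMonoidHom) := rfl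
    rw [hcomp, ← MonoidHom.map_range,
      MonoidHom.range_eq_top_of_surjective _ MulEquiv.ulift.symm.surjective]
    exact (MonoidHom.range_eq_map _).symm
  have hE2 : Subgroup.map E (Monoid.Coprod.inr : B →* Monoid.Coprod A B).range
      = (Monoid.CoprodI.of : Fam A B false →* Monoid.CoprodI (Fam A B)).range := by
    rw [MonoidHom.map_range]
    have hcomp : E.comp (Monoid.Coprod.inr : B →* Monoid.Coprod A B)
        = (Monoid.CoprodI.of (M := Fam A B) (i := false)).comp
            (MulEquiv.ulift.symm.toMonoidHom) := rfl
    rw [hcomp, ← MonoidHom.map_range,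
      MonoidHom.range_eq_top_of_surjective _ MulEquiv.ulift.symm.surjective]
    exact (MonoidHom.range_eq_map _).symm
  have hconj : Subgroup.map E (Subgroup.map (MulAut.conj g).toMonoidHom
        (Monoid.Coprod.inr : B →* Monoid.Coprod A B).range)
      = Subgroup.map (MulAut.conj (E g)).toMonoidHom
          (Subgroup.map E (Monoid.Coprod.inr : B →* Monoid.Coprod A B).range) := by
    rw [Subgroup.map_map, Subgroup.map_map]
    congr 1
    refine MonoidHom.ext fun z => ?_
    show E (g * z * g⁻¹) = E g * E z * (E g)⁻¹
    rw [map_mul, map_mul, map_inv]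
  rw [hE1, hconj, hE2] at h2
  have htop : Subgroup.map E ⊤ = ⊤ := by
    rw [← MonoidHom.range_eq_map]
    exact MonoidHom.range_eq_top_of_surjective _ hEsurj
  rw [htop] at h2
  have hij : (true : Bool) ≠ false := fun hc => Bool.noConfusion hc
  obtain ⟨a, b, hab⟩ := @core Bool (Fam A B) (famGroup A B) instDecidableEqBool instD
    true false hij
    ((@Word.equiv Bool (Fam A B) (fun b => (famGroup A B b).toMonoid)
      instDecidableEqBool instD (E g)).toList.length)
    (E g) le_rfl h2
  refine ⟨MulEquiv.ulift a, MulEquiv.ulift b, ?_⟩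
  have hgg : g = e.symm (Monoid.CoprodI.of a) * e.symm (Monoid.CoprodI.of b) := by
    rw [← map_mul, ← hab]
    exact (e.symm_apply_apply g).symm
  rw [hgg]
  have h3 : e.symm (Monoid.CoprodI.of (M := Fam A B) (i := true) a)
      = Monoid.Coprod.inl (MulEquiv.ulift a) := by
    show ofFam A B (Monoid.CoprodI.of a) = _
    simp only [ofFam, Monoid.CoprodI.lift_of]
    rfl
  have h4 : e.symm (Monoid.CoprodI.of (M := Fam A B) (i := false) b)
      = Monoid.Coprod.inr (MulEquiv.ulift b) := by
    show ofFam A B (Monoid.CoprodI.of b) = _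
    simp only [ofFam, Monoid.CoprodI.lift_of]
    rfl
  rw [h3, h4]

end Binary

end BassSerreAux

/-- Algebraic characterization of adjacency in the Bass–Serre tree of `A ∗ B`: the subgroup
generated by `xAx⁻¹` and `yBy⁻¹` is the whole free product iff the cosets `xA` and `yB` meet. -/
theorem conj_sup_eq_top_iff_cosets_meet {A B : Type*} [Group A] [Group B]
    [Nontrivial A] [Nontrivial B] (x y : Monoid.Coprod A B) :
    (Subgroup.map (MulAut.conj x).toMonoidHom
        (Monoid.Coprod.inl : A →* Monoid.Coprod A B).range ⊔
      Subgroup.map (MulAut.conj y).toMonoidHom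
        (Monoid.Coprod.inr : B →* Monoid.Coprod A B).range = ⊤) ↔
      ((fun a => x * a) ''
          ((Monoid.Coprod.inl : A →* Monoid.Coprod A B).range : Set (Monoid.Coprod A B)) ∩
        (fun b => y * b) ''
          ((Monoid.Coprod.inr : B →* Monoid.Coprod A B).range : Set (Monoid.Coprod A B))).Nonempty := by
  constructor
  · intro h
    have h2 := congrArg (Subgroup.map (MulAut.conj x⁻¹).toMonoidHom) h
    rw [Subgroup.map_sup, Subgroup.map_map, Subgroup.map_map,
      ← BassSerreAux.conj_hom_mul, ← BassSerreAux.conj_hom_mul, inv_mul_cancel] at h2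
    have hone : (MulAut.conj (1 : Monoid.Coprod A B)).toMonoidHom
        = MonoidHom.id (Monoid.Coprod A B) := by
      refine MonoidHom.ext fun z => ?_
      show 1 * z * 1⁻¹ = z
      group
    rw [hone, Subgroup.map_id] at h2
    have htop2 : Subgroup.map (MulAut.conj x⁻¹).toMonoidHom
        (⊤ : Subgroup (Monoid.Coprod A B)) = ⊤ :=
      (BassSerreAux.map_aut_top_iff _ _).mpr rfl
    rw [htop2] at h2
    obtain ⟨a, b, hab⟩ := BassSerreAux.coprod_core _ h2
    refine ⟨x * Monoid.Coprod.inl a,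
      ⟨Monoid.Coprod.inl a, ⟨a, rfl⟩, rfl⟩,
      ⟨Monoid.Coprod.inr b⁻¹, ⟨b⁻¹, rfl⟩, ?_⟩⟩
    have hy : y = x * (Monoid.Coprod.inl a * Monoid.Coprod.inr b) := by
      rw [← hab]; group
    rw [map_inv, hy]
    group
  · rintro ⟨z, ⟨u, hu, huz⟩, v, hv, hvz⟩
    obtain ⟨a, rfl⟩ := hu
    obtain ⟨b, rfl⟩ := hv
    have hw : x * Monoid.Coprod.inl a = y * Monoid.Coprod.inr b := by
      simp only [] at huz hvz
      rw [huz, ← hvz]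
    have claim1 : Subgroup.map (MulAut.conj (x * Monoid.Coprod.inl a)).toMonoidHom
        (Monoid.Coprod.inl : A →* Monoid.Coprod A B).range
        ≤ Subgroup.map (MulAut.conj x).toMonoidHom
            (Monoid.Coprod.inl : A →* Monoid.Coprod A B).range := by
      rintro _ ⟨_, ⟨α, rfl⟩, rfl⟩
      refine ⟨Monoid.Coprod.inl (a * α * a⁻¹), ⟨a * α * a⁻¹, rfl⟩, ?_⟩
      show x * Monoid.Coprod.inl (a * α * a⁻¹) * x⁻¹
        = (x * Monoid.Coprod.inl a) * Monoid.Coprod.inl α * (x * Monoid.Coprod.inl a)⁻¹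
      rw [map_mul, map_mul, map_inv]
      group
    have claim2 : Subgroup.map (MulAut.conj (x * Monoid.Coprod.inl a)).toMonoidHom
        (Monoid.Coprod.inr : B →* Monoid.Coprod A B).range
        ≤ Subgroup.map (MulAut.conj y).toMonoidHom
            (Monoid.Coprod.inr : B →* Monoid.Coprod A B).range := by
      rintro _ ⟨_, ⟨β, rfl⟩, rfl⟩
      refine ⟨Monoid.Coprod.inr (b * β * b⁻¹), ⟨b * β * b⁻¹, rfl⟩, ?_⟩
      show y * Monoid.Coprod.inr (b * β * b⁻¹) * y⁻¹
        = (x * Monoid.Coprod.inl a) * Monoid.Coprod.inr β * (x * Monoid.Coprod.inl a)⁻¹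
      rw [hw, map_mul, map_mul, map_inv]
      group
    have hle : (⊤ : Subgroup (Monoid.Coprod A B))
        ≤ Subgroup.map (MulAut.conj x).toMonoidHom
            (Monoid.Coprod.inl : A →* Monoid.Coprod A B).range ⊔
          Subgroup.map (MulAut.conj y).toMonoidHom
            (Monoid.Coprod.inr : B →* Monoid.Coprod A B).range := by
      calc (⊤ : Subgroup (Monoid.Coprod A B))
          = Subgroup.map (MulAut.conj (x * Monoid.Coprod.inl a)).toMonoidHom ⊤ :=
            ((BassSerreAux.map_aut_top_iff _ _).mpr rfl).symm
        _ = Subgroup.map (MulAut.conj (x * Monoid.Coprod.inl a)).toMonoidHom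
              ((Monoid.Coprod.inl : A →* Monoid.Coprod A B).range ⊔
                (Monoid.Coprod.inr : B →* Monoid.Coprod A B).range) := by
            rw [Monoid.Coprod.range_inl_sup_range_inr]
        _ = Subgroup.map (MulAut.conj (x * Monoid.Coprod.inl a)).toMonoidHom
              (Monoid.Coprod.inl : A →* Monoid.Coprod A B).range ⊔
            Subgroup.map (MulAut.conj (x * Monoid.Coprod.inl a)).toMonoidHom
              (Monoid.Coprod.inr : B →* Monoid.Coprod A B).range :=
            Subgroup.map_sup _ _ _
        _ ≤ _ := sup_le_sup claim1 claim2
    exact le_antisymm le_top hle
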